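/- arXiv:1712.03492 — 6 statements merged into one kernel-verified Lean document; each statement's English description precedes it below -/
import Mathlib

section
/- Let P be an additive category, let α : A → B and γ : C → B be morphisms of P, and let (W, p : W → A, q : W → C) be a weak pullback of the cospan (α, γ). Then the morphism of the Freyd category A(P) from the object (A ← W) with structure morphism p to the object (B ← C) with structure morphism γ, represented by α (with witness q), is a monomorphism in A(P). -/
open CategoryTheory Limits Opposite

set_option linter.unusedSectionVars false

universe v u

/-- An object of the Freyd category of `P`: a morphism `ρ : R ⟶ A` of `P`,
thought of as "the object `A` with relations `R`". -/
structure FreydObj (P : Type u) [CategoryTheory.Category.{v} P] : Type max u v where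
  R : P
  A : P
  ρ : R ⟶ A

namespace FreydObj

variable {P : Type u} [Category.{v} P] [Preadditive P]

/-- The "pre-Freyd" category: morphisms are morphism data admitting a witness;
the Freyd category is its quotient by the relation of having a homotopy `λ`. -/
instance : Category.{v} (FreydObj P) where
  Hom X Y := {α : X.A ⟶ Y.A // ∃ w : X.R ⟶ Y.R, X.ρ ≫ α = w ≫ Y.ρ}
  id X := ⟨𝟙 X.A, ⟨𝟙 X.R, by simp⟩⟩
  comp {X Y Z} f g := ⟨f.1 ≫ g.1, by
    obtain ⟨w, hw⟩ := f.2
    obtain ⟨v, hv⟩ := g.2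
    refine ⟨w ≫ v, ?_⟩
    rw [← Category.assoc, hw, Category.assoc, hv, Category.assoc]⟩
  id_comp f := Subtype.ext (Category.id_comp _)
  comp_id f := Subtype.ext (Category.comp_id _)
  assoc f g h := Subtype.ext (Category.assoc _ _ _)

@[simp] lemma comp_val {X Y Z : FreydObj P} (f : X ⟶ Y) (g : Y ⟶ Z) :
    (f ≫ g).1 = f.1 ≫ g.1 := rfl

@[simp] lemma id_val (X : FreydObj P) : (𝟙 X : X ⟶ X).1 = 𝟙 X.A := rfl

instance homAdd (X Y : FreydObj P) : Add (X ⟶ Y) :=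
  ⟨fun f g => ⟨f.1 + g.1, by
    obtain ⟨w, hw⟩ := f.2
    obtain ⟨v, hv⟩ := g.2
    exact ⟨w + v, by rw [Preadditive.comp_add, Preadditive.add_comp, hw, hv]⟩⟩⟩

instance homZero (X Y : FreydObj P) : Zero (X ⟶ Y) := ⟨⟨0, ⟨0, by simp⟩⟩⟩

instance homNeg (X Y : FreydObj P) : Neg (X ⟶ Y) :=
  ⟨fun f => ⟨-f.1, by
    obtain ⟨w, hw⟩ := f.2
    exact ⟨-w, by rw [Preadditive.comp_neg, Preadditive.neg_comp, hw]⟩⟩⟩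

@[simp] lemma add_val {X Y : FreydObj P} (f g : X ⟶ Y) : (f + g).1 = f.1 + g.1 := rfl
@[simp] lemma zero_val (X Y : FreydObj P) : (0 : X ⟶ Y).1 = 0 := rfl
@[simp] lemma neg_val {X Y : FreydObj P} (f : X ⟶ Y) : (-f).1 = -f.1 := rfl

instance homAddCommGroup (X Y : FreydObj P) : AddCommGroup (X ⟶ Y) where
  add_assoc f g h := Subtype.ext (add_assoc f.1 g.1 h.1)
  zero_add f := Subtype.ext (zero_add f.1)
  add_zero f := Subtype.ext (add_zero f.1)
  add_comm f g := Subtype.ext (add_comm f.1 g.1)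
  neg_add_cancel f := Subtype.ext (neg_add_cancel f.1)
  nsmul := nsmulRec
  zsmul := zsmulRec

instance : Preadditive (FreydObj P) where
  add_comp _ _ _ f f' g := Subtype.ext (by simp [Preadditive.add_comp])
  comp_add _ _ _ f g g' := Subtype.ext (by simp [Preadditive.comp_add])

end FreydObj

/-- Two morphism data are identified in the Freyd category iff their difference
factors through the relations of the target. -/
def freydRel (P : Type u) [Category.{v} P] [Preadditive P] : HomRel (FreydObj P) :=
  fun {X Y} f g => ∃ l : X.A ⟶ Y.R, l ≫ Y.ρ = f.1 - g.1

instance freydRel_congruence (P : Type u) [Category.{v} P] [Preadditive P] :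
    Congruence (freydRel P) where
  equivalence :=
    { refl := fun f => ⟨0, by simp⟩
      symm := fun {f g} h => by
        obtain ⟨l, hl⟩ := h
        exact ⟨-l, by rw [Preadditive.neg_comp, hl]; abel⟩
      trans := fun {f g h} h₁ h₂ => by
        obtain ⟨l₁, hl₁⟩ := h₁
        obtain ⟨l₂, hl₂⟩ := h₂
        exact ⟨l₁ + l₂, by rw [Preadditive.add_comp, hl₁, hl₂]; abel⟩ }
  comp_left f g g' h := by
    obtain ⟨l, hl⟩ := h
    exact ⟨f.1 ≫ l, by rw [Category.assoc, hl, Preadditive.comp_sub]; rfl⟩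
  comp_right g h := by
    obtain ⟨l, hl⟩ := h
    obtain ⟨w, hw⟩ := g.2
    exact ⟨l ≫ w, by
      rw [Category.assoc, ← hw, ← Category.assoc, hl, Preadditive.sub_comp]; rfl⟩

/-- The Freyd category of an additive category `P`. -/
abbrev Freyd (P : Type u) [Category.{v} P] [Preadditive P] :=
  CategoryTheory.Quotient (freydRel P)

noncomputable instance (P : Type u) [Category.{v} P] [Preadditive P] :
    Preadditive (Freyd P) :=
  CategoryTheory.Quotient.preadditive (freydRel P) (by
    rintro X Y f₁ f₂ g₁ g₂ ⟨l₁, hl₁⟩ ⟨l₂, hl₂⟩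
    exact ⟨l₁ + l₂, by
      rw [Preadditive.add_comp, hl₁, hl₂]
      show _ = (f₁ + g₁).1 - (f₂ + g₂).1
      simp only [FreydObj.add_val]
      abel⟩)

/-- The projection functor from the pre-Freyd category to the Freyd category. -/
abbrev Freyd.Q (P : Type u) [Category.{v} P] [Preadditive P] :
    FreydObj P ⥤ Freyd P :=
  CategoryTheory.Quotient.functor (freydRel P)

/-- `P` has weak kernels. -/
def HasWeakKernels (P : Type u) [Category.{v} P] [Preadditive P] : Prop :=
  ∀ ⦃A B : P⦄ (f : A ⟶ B), ∃ (K : P) (κ : K ⟶ A), κ ≫ f = 0 ∧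
    ∀ ⦃T : P⦄ (τ : T ⟶ A), τ ≫ f = 0 → ∃ u : T ⟶ K, u ≫ κ = τ

/-- given a cospan `α : A ⟶ B`, `γ : C ⟶ B` in an additive category `P` and a
weak pullback `(W, p, q)` of it, the morphism of the Freyd category from `(A ← W)` (with
structure morphism `p`) to `(B ← C)` (with structure morphism `γ`), represented by `α`
(with witness `q`), is a monomorphism. -/
theorem freyd_mono (P : Type u) [Category.{v} P] [Preadditive P]
    {A B C W : P} (α : A ⟶ B) (γ : C ⟶ B) (p : W ⟶ A) (q : W ⟶ C)
    (comm : p ≫ α = q ≫ γ)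
    (wpb : ∀ ⦃T : P⦄ (p' : T ⟶ A) (q' : T ⟶ C), p' ≫ α = q' ≫ γ →
      ∃ u : T ⟶ W, u ≫ p = p' ∧ u ≫ q = q') :
    Mono ((Freyd.Q P).map (X := ⟨W, A, p⟩) (Y := ⟨C, B, γ⟩) ⟨α, ⟨q, comm⟩⟩) := by
  apply Preadditive.mono_of_cancel_zero
  intro Z g hg
  obtain ⟨Z⟩ := Z
  obtain ⟨g', rfl⟩ := (Freyd.Q P).map_surjective g
  have h0 : (0 : (Freyd.Q P).obj Z ⟶ (Freyd.Q P).obj ⟨W, A, p⟩) = (Freyd.Q P).map (0 : Z ⟶ ⟨W, A, p⟩) := rfl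
  have h1 : (0 : (Freyd.Q P).obj Z ⟶ (Freyd.Q P).obj ⟨C, B, γ⟩) = (Freyd.Q P).map (0 : Z ⟶ ⟨C, B, γ⟩) := rfl
  rw [h1, ← Functor.map_comp, Quotient.functor_map_eq_iff] at hg
  rw [h0, Quotient.functor_map_eq_iff]
  obtain ⟨l, hl⟩ := hg
  simp only [FreydObj.comp_val, FreydObj.zero_val, sub_zero] at hl
  obtain ⟨u, hu, -⟩ := wpb g'.1 l hl.symm
  exact ⟨u, by simpa using hu⟩
end

section
/- Let P be an additive category, A an abelian category, and F : P → A a fully faithful additive functor such that F(X) is a projective object of A for every object X of P. Then the induced functor U : A(P) → A, sending an object (A ← R_A) with structure morphism ρ_A to the cokernel of F(ρ_A) and a morphism [α] to the morphism induced between cokernels, is fully faithful, and its essential image is the full subcategory of A consisting of those objects M for which there exist objects P_M, Q_M of P and an exact sequence F(Q_M) → F(P_M) → M → 0 in A. In particular, U is an equivalence of A(P) with this full subcategory. -/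
open CategoryTheory Limits Opposite

set_option linter.unusedSectionVars false

universe v u

universe v₂ u₂

section Induced

variable {P : Type u} [Category.{v} P] [Preadditive P]
variable {A : Type u₂} [Category.{v₂} A] [Abelian A] (F : P ⥤ A)

/-- The functor `FreydObj P ⥤ A` sending `(A ← R_A)` to `coker (F ρ_A)`. -/
noncomputable def preInducedFunctor : FreydObj P ⥤ A where
  obj X := cokernel (F.map X.ρ)
  map {X Y} f :=
    cokernel.map (F.map X.ρ) (F.map Y.ρ) (F.map f.2.choose) (F.map f.1)
      (by rw [← F.map_comp, ← F.map_comp]; exact congrArg F.map f.2.choose_spec)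
  map_id X := by
    apply coequalizer.hom_ext
    simp
  map_comp {X Y Z} f g := by
    apply coequalizer.hom_ext
    simp only [cokernel.π_desc, cokernel.π_desc_assoc, FreydObj.comp_val, F.map_comp,
      Category.assoc]

/-- The induced functor `A(P) ⥤ A`. -/
noncomputable def inducedFunctor [F.Additive] : Freyd P ⥤ A :=
  CategoryTheory.Quotient.lift (freydRel P) (preInducedFunctor F) (by
    rintro X Y f g ⟨l, hl⟩
    apply coequalizer.hom_ext
    have hf : f.1 = g.1 + l ≫ Y.ρ := by rw [hl]; abel
    simp [preInducedFunctor, hf, Preadditive.add_comp])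

end Induced

section Proof

variable {P : Type u} [Category.{v} P] [Preadditive P]
variable {A : Type u₂} [Category.{v₂} A] [Abelian A] (F : P ⥤ A)

lemma preInduced_comm {X Y : FreydObj P} (f : X ⟶ Y) :
    cokernel.π (F.map X.ρ) ≫ (preInducedFunctor F).map f
      = F.map f.1 ≫ cokernel.π (F.map Y.ρ) := by
  simp [preInducedFunctor]

lemma factor_of_comp_cokernelπ_zero {T R B : A} [Projective T] (f : R ⟶ B) (d : T ⟶ B)
    (h : d ≫ cokernel.π f = 0) : ∃ l : T ⟶ R, l ≫ f = d := by
  refine ⟨Projective.factorThru (kernel.lift _ d h) (Abelian.factorThruImage f), ?_⟩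
  have hf : Abelian.factorThruImage f ≫ Abelian.image.ι f = f := Abelian.image.fac f
  calc Projective.factorThru (kernel.lift _ d h) (Abelian.factorThruImage f) ≫ f
      = (Projective.factorThru (kernel.lift _ d h) (Abelian.factorThruImage f) ≫
          Abelian.factorThruImage f) ≫ Abelian.image.ι f := by
        rw [Category.assoc, hf]
    _ = kernel.lift _ d h ≫ kernel.ι _ := by rw [Projective.factorThru_comp]
    _ = d := kernel.lift_ι _ _ _

end Proof

/-- if `F : P ⥤ A` is a fully faithful additive functor from an additive
category to an abelian category whose values are projective, then the induced functor
`U : A(P) ⥤ A` is fully faithful, and its essential image consists exactly of those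
objects `M` admitting an exact sequence `F Q₀ ⟶ F P₀ ⟶ M ⟶ 0`. -/
theorem induced_functor_equivalence (P : Type u) [Category.{v} P] [Preadditive P]
    (A : Type u₂) [Category.{v₂} A] [Abelian A]
    (F : P ⥤ A) [F.Full] [F.Faithful] [F.Additive]
    (hproj : ∀ X : P, Projective (F.obj X)) :
    (inducedFunctor F).Full ∧ (inducedFunctor F).Faithful ∧
      ∀ M : A, (∃ X : Freyd P, Nonempty ((inducedFunctor F).obj X ≅ M)) ↔
        ∃ (P₀ Q₀ : P) (g : Q₀ ⟶ P₀) (c : F.obj P₀ ⟶ M) (hz : F.map g ≫ c = 0),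
          Epi c ∧ (ShortComplex.mk (F.map g) c hz).Exact := by
    classical
  have hff : ∀ {X Y : FreydObj P} (f g : X ⟶ Y),
      (preInducedFunctor F).map f = (preInducedFunctor F).map g →
      (Freyd.Q P).map f = (Freyd.Q P).map g := by
    intro X Y f g h
    haveI : Projective (F.obj X.A) := hproj _
    have h1 : F.map f.1 ≫ cokernel.π (F.map Y.ρ) = F.map g.1 ≫ cokernel.π (F.map Y.ρ) := by
      rw [← preInduced_comm, ← preInduced_comm, h]
    have h2 : F.map (f.1 - g.1) ≫ cokernel.π (F.map Y.ρ) = 0 := by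
      rw [F.map_sub, Preadditive.sub_comp, h1, sub_self]
    obtain ⟨l', hl'⟩ := factor_of_comp_cokernelπ_zero (F.map Y.ρ) _ h2
    obtain ⟨l, rfl⟩ := F.map_surjective l'
    rw [← F.map_comp] at hl'
    exact CategoryTheory.Quotient.sound (freydRel P) ⟨l, F.map_injective hl'⟩
  have hfaith : (inducedFunctor F).Faithful := by
    constructor
    rintro ⟨X⟩ ⟨Y⟩ f g h
    obtain ⟨f₀, rfl⟩ := (Quotient.functor (freydRel P)).map_surjective f
    obtain ⟨g₀, rfl⟩ := (Quotient.functor (freydRel P)).map_surjective g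
    simp only [_root_.inducedFunctor, Quotient.lift_map_functor_map] at h
    exact hff f₀ g₀ h
  have hfull : (inducedFunctor F).Full := by
    constructor
    rintro ⟨X⟩ ⟨Y⟩ φ
    haveI : Projective (F.obj X.A) := hproj _
    haveI : Projective (F.obj X.R) := hproj _
    let φ' : cokernel (F.map X.ρ) ⟶ cokernel (F.map Y.ρ) := φ
    let a : F.obj X.A ⟶ F.obj Y.A :=
      Projective.factorThru (cokernel.π (F.map X.ρ) ≫ φ') (cokernel.π (F.map Y.ρ))
    have ha : a ≫ cokernel.π (F.map Y.ρ) = cokernel.π (F.map X.ρ) ≫ φ' :=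
      Projective.factorThru_comp _ _
    have h2 : (F.map X.ρ ≫ a) ≫ cokernel.π (F.map Y.ρ) = 0 := by
      rw [Category.assoc, ha, cokernel.condition_assoc, zero_comp]
    obtain ⟨w', hw'⟩ := factor_of_comp_cokernelπ_zero (F.map Y.ρ) _ h2
    obtain ⟨α, hα⟩ := F.map_surjective a
    obtain ⟨w, rfl⟩ := F.map_surjective w'
    rw [← hα, ← F.map_comp, ← F.map_comp] at hw'
    have hwit : X.ρ ≫ α = w ≫ Y.ρ := (F.map_injective hw').symm
    refine ⟨(Quotient.functor (freydRel P)).map ⟨α, w, hwit⟩, ?_⟩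
    show (preInducedFunctor F).map _ = φ'
    apply coequalizer.hom_ext
    rw [preInduced_comm, hα, ha]; rfl
  refine ⟨hfull, hfaith, fun M => ⟨?_, ?_⟩⟩
  · rintro ⟨⟨X⟩, ⟨i⟩⟩
    let i' : cokernel (F.map X.ρ) ≅ M := i
    have hz : F.map X.ρ ≫ cokernel.π (F.map X.ρ) ≫ i'.hom = 0 := by
      rw [cokernel.condition_assoc, zero_comp]
    refine ⟨X.A, X.R, X.ρ, cokernel.π (F.map X.ρ) ≫ i'.hom, hz, epi_comp _ _, ?_⟩
    have hbase : (ShortComplex.mk (F.map X.ρ) (cokernel.π (F.map X.ρ))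
        (cokernel.condition _)).Exact :=
      ShortComplex.exact_of_g_is_cokernel _ (cokernelIsCokernel _)
    refine ShortComplex.exact_of_iso ?_ hbase
    exact ShortComplex.isoMk (Iso.refl _) (Iso.refl _) i' (by simp) (by simp)
  · rintro ⟨P₀, Q₀, g, c, hz, hepi, hexact⟩
    refine ⟨(Quotient.functor (freydRel P)).obj ⟨Q₀, P₀, g⟩, ⟨?_⟩⟩
    haveI : Epi (ShortComplex.mk (F.map g) c hz).g := hepi
    exact (IsColimit.coconePointUniqueUpToIso (cokernelIsCokernel (F.map g))
      hexact.gIsCokernel : cokernel (F.map g) ≅ M)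
end

section
/- Let P be an additive category. The Freyd category A(P) is equivalent to the category fp(P^op, Ab) of finitely presented contravariant functors: the full subcategory of the category of additive functors P^op → Ab consisting of those functors F for which there exist objects A, B of P and an exact sequence of functors Hom_P(−, B) → Hom_P(−, A) → F → 0. -/
open CategoryTheory Limits Opposite

set_option linter.unusedSectionVars false

universe v u

/-- A contravariant additive functor `F : Pᵒᵖ ⥤ Ab` is finitely presented if it admits an
exact sequence `Hom(−, B) ⟶ Hom(−, A) ⟶ F ⟶ 0`, where by Yoneda the first map is induced
by a morphism `g : B ⟶ A`. -/
def IsFinitelyPresentedFunctor {P : Type u} [Category.{v} P] [Preadditive P]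
    (F : Pᵒᵖ ⥤ AddCommGrpCat.{v}) : Prop :=
  ∃ (A B : P) (g : B ⟶ A) (π : preadditiveYoneda.obj A ⟶ F)
    (hz : preadditiveYoneda.map g ≫ π = 0),
      Epi π ∧ (ShortComplex.mk (preadditiveYoneda.map g) π hz).Exact



section Construction

open CategoryTheory.Preadditive

/-- Exactness in a functor category is detected objectwise. -/
lemma exact_iff_eval {J : Type*} [Category J] {C : Type*} [Category.{v} C] [Abelian C]
    (S : ShortComplex (J ⥤ C)) :
    S.Exact ↔ ∀ j : J, (S.map ((evaluation J C).obj j)).Exact := by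
  haveI : ∀ j : J, PreservesFiniteLimits ((evaluation J C).obj j) :=
    fun j => ⟨fun _ _ _ => inferInstance⟩
  haveI : ∀ j : J, PreservesFiniteColimits ((evaluation J C).obj j) :=
    fun j => ⟨fun _ _ _ => inferInstance⟩
  haveI : ∀ j : J, ((evaluation J C).obj j).PreservesHomology := fun j =>
    Functor.preservesHomologyOfExact _
  rw [ShortComplex.exact_iff_isZero_homology, Functor.isZero_iff]
  refine forall_congr' fun j => ?_
  rw [ShortComplex.exact_iff_isZero_homology]
  exact (S.mapHomologyIso ((evaluation J C).obj j)).symm.isZero_iff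

namespace FreydFP

variable {P : Type u} [Category.{v} P] [Preadditive P]

/-- The subgroup of morphisms `T ⟶ Z.A` which factor through `Z.ρ`. -/
def sub (Z : FreydObj P) (T : P) : AddSubgroup (T ⟶ Z.A) :=
  AddMonoidHom.range (rightComp T Z.ρ)

lemma mem_sub {Z : FreydObj P} {T : P} {f : T ⟶ Z.A} :
    f ∈ sub Z T ↔ ∃ w : T ⟶ Z.R, w ≫ Z.ρ = f := Iff.rfl

/-- The finitely presented functor associated to an object of the Freyd category. -/
def Fobj (Z : FreydObj P) : Pᵒᵖ ⥤ AddCommGrpCat.{v} where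
  obj T := AddCommGrpCat.of ((T.unop ⟶ Z.A) ⧸ sub Z T.unop)
  map {T T'} h := AddCommGrpCat.ofHom (QuotientAddGroup.map _ _ (leftComp Z.A h.unop)
    (by rintro x ⟨w, rfl⟩
        refine ⟨h.unop ≫ w, ?_⟩
        show (h.unop ≫ w) ≫ Z.ρ = h.unop ≫ (w ≫ Z.ρ)
        rw [Category.assoc]))
  map_id T := by
    ext x
    simp [leftComp, AddCommGrpCat.ofHom]
  map_comp {T T' T''} h h' := by
    ext x
    simp [leftComp, AddCommGrpCat.ofHom]

@[simp] lemma Fobj_map_mk (Z : FreydObj P) {T T' : Pᵒᵖ} (h : T ⟶ T')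
    (f : T.unop ⟶ Z.A) :
    (Fobj Z).map h (QuotientAddGroup.mk f) = QuotientAddGroup.mk (h.unop ≫ f) := rfl

instance Fobj_additive (Z : FreydObj P) : (Fobj Z).Additive where
  map_add {T T'} {f g} := by
    ext x
    obtain ⟨m, rfl⟩ := QuotientAddGroup.mk'_surjective _ x
    show QuotientAddGroup.mk ((f + g).unop ≫ m) = _
    rw [unop_add, Preadditive.add_comp]
    rfl

/-- Functoriality of `Fobj` on morphism data. -/
def Fmap {X Y : FreydObj P} (α : X ⟶ Y) : Fobj X ⟶ Fobj Y where
  app T := AddCommGrpCat.ofHom (QuotientAddGroup.map _ _ (rightComp T.unop α.1)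
    (by rintro x ⟨w, rfl⟩
        obtain ⟨v, hv⟩ := α.2
        refine ⟨w ≫ v, ?_⟩
        show (w ≫ v) ≫ Y.ρ = (w ≫ X.ρ) ≫ α.1
        rw [Category.assoc, ← hv, Category.assoc]))
  naturality {T T'} h := by
    ext x
    obtain ⟨m, rfl⟩ := QuotientAddGroup.mk'_surjective _ x
    show QuotientAddGroup.mk ((h.unop ≫ m) ≫ α.1) = QuotientAddGroup.mk (h.unop ≫ m ≫ α.1)
    rw [Category.assoc]

@[simp] lemma Fmap_app_mk {X Y : FreydObj P} (α : X ⟶ Y) (T : Pᵒᵖ)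
    (m : T.unop ⟶ X.A) :
    (Fmap α).app T (QuotientAddGroup.mk m) = QuotientAddGroup.mk (m ≫ α.1) := rfl

/-- The projection `Hom(−, Z.A) ⟶ Fobj Z`. -/
def pr (Z : FreydObj P) : preadditiveYoneda.obj Z.A ⟶ Fobj Z where
  app T := AddCommGrpCat.ofHom (QuotientAddGroup.mk' (sub Z T.unop))
  naturality {T T'} h := rfl

lemma pr_comp_zero (Z : FreydObj P) :
    preadditiveYoneda.map Z.ρ ≫ pr Z = 0 := by
  ext T (w : T.unop ⟶ Z.R)
  show QuotientAddGroup.mk' (sub Z T.unop) (w ≫ Z.ρ) = 0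
  rw [QuotientAddGroup.mk'_apply, QuotientAddGroup.eq_zero_iff]
  exact ⟨w, rfl⟩

instance pr_epi (Z : FreydObj P) : Epi (pr Z) := by
  haveI : ∀ T, Epi ((pr Z).app T) := fun T => by
    rw [AddCommGrpCat.epi_iff_surjective]
    exact QuotientAddGroup.mk'_surjective (sub Z T.unop)
  exact NatTrans.epi_of_epi_app _

lemma Fobj_fp (Z : FreydObj P) : IsFinitelyPresentedFunctor (Fobj Z) := by
  refine ⟨Z.A, Z.R, Z.ρ, pr Z, pr_comp_zero Z, inferInstance, ?_⟩
  rw [exact_iff_eval]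
  intro T
  rw [ShortComplex.ab_exact_iff]
  intro (x : T.unop ⟶ Z.A) hx
  replace hx : QuotientAddGroup.mk' (sub Z T.unop) x = 0 := hx
  rw [QuotientAddGroup.mk'_apply, QuotientAddGroup.eq_zero_iff] at hx
  obtain ⟨w, hw⟩ := hx
  exact ⟨w, hw⟩


/-- The functor from the pre-Freyd category to functors. -/
def G0 : FreydObj P ⥤ (Pᵒᵖ ⥤ AddCommGrpCat.{v}) where
  obj := Fobj
  map := Fmap
  map_id Z := by
    ext T x
    obtain ⟨m, rfl⟩ := QuotientAddGroup.mk'_surjective _ x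
    show QuotientAddGroup.mk (m ≫ (𝟙 Z : Z ⟶ Z).1) = QuotientAddGroup.mk m
    rw [FreydObj.id_val, Category.comp_id]
  map_comp {X Y Z} f g := by
    ext T x
    obtain ⟨m, rfl⟩ := QuotientAddGroup.mk'_surjective _ x
    show QuotientAddGroup.mk (m ≫ (f ≫ g).1) = QuotientAddGroup.mk ((m ≫ f.1) ≫ g.1)
    rw [FreydObj.comp_val, Category.assoc]

/-- The functor to the category of finitely presented functors. -/
def G1 : FreydObj P ⥤ ObjectProperty.FullSubcategory (fun F : Pᵒᵖ ⥤ AddCommGrpCat.{v} =>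
    F.Additive ∧ IsFinitelyPresentedFunctor F) :=
  ObjectProperty.lift _ G0 (fun Z => ⟨Fobj_additive Z, Fobj_fp Z⟩)

lemma G1_invariant {X Y : FreydObj P} (f g : X ⟶ Y) (h : freydRel P f g) :
    (G1 (P := P)).map f = (G1 (P := P)).map g := by
  obtain ⟨l, hl⟩ := h
  apply InducedCategory.hom_ext
  apply NatTrans.ext
  funext T
  ext x
  obtain ⟨m, rfl⟩ := QuotientAddGroup.mk'_surjective _ x
  show QuotientAddGroup.mk (m ≫ f.1) = QuotientAddGroup.mk (m ≫ g.1)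
  rw [QuotientAddGroup.eq_iff_sub_mem]
  refine ⟨m ≫ l, ?_⟩
  show (m ≫ l) ≫ Y.ρ = m ≫ f.1 - m ≫ g.1
  rw [Category.assoc, hl, Preadditive.comp_sub]

/-- The induced functor on the Freyd category. -/
def L : Freyd P ⥤ ObjectProperty.FullSubcategory (fun F : Pᵒᵖ ⥤ AddCommGrpCat.{v} =>
    F.Additive ∧ IsFinitelyPresentedFunctor F) :=
  CategoryTheory.Quotient.lift _ G1 (fun _ _ f g h => G1_invariant f g h)

instance : (L (P := P)).Faithful := by
  constructor
  rintro ⟨X⟩ ⟨Y⟩ f g h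
  obtain ⟨f', rfl⟩ := (Freyd.Q P).map_surjective f
  obtain ⟨g', rfl⟩ := (Freyd.Q P).map_surjective g
  rw [Quotient.functor_map_eq_iff]
  replace h : (G1 (P := P)).map f' = (G1 (P := P)).map g' := h
  have h2 := congrArg (fun (φ : Fobj X ⟶ Fobj Y) =>
    φ.app (op X.A) (QuotientAddGroup.mk (𝟙 X.A))) (show ((G1 (P := P)).map f').hom = ((G1 (P := P)).map g').hom by rw [h])
  simp only [Fmap_app_mk] at h2
  replace h2 : QuotientAddGroup.mk (𝟙 X.A ≫ f'.1) = QuotientAddGroup.mk (𝟙 X.A ≫ g'.1) := h2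
  rw [Category.id_comp, Category.id_comp, QuotientAddGroup.eq_iff_sub_mem] at h2
  obtain ⟨l, hl⟩ := h2
  exact ⟨l, hl⟩

instance : (L (P := P)).Full := by
  constructor
  rintro ⟨X⟩ ⟨Y⟩ φ
  let φ' : Fobj X ⟶ Fobj Y := φ.hom
  obtain ⟨a, ha⟩ := QuotientAddGroup.mk'_surjective (sub Y X.A)
    (φ'.app (op X.A) (QuotientAddGroup.mk (𝟙 X.A)))
  have hnat := congrArg (fun (ψ : (Fobj X).obj (op X.A) ⟶ (Fobj Y).obj (op X.R)) =>
    ψ (QuotientAddGroup.mk (𝟙 X.A))) (φ'.naturality (X.ρ.op))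
  replace hnat : φ'.app (op X.R) ((Fobj X).map X.ρ.op (QuotientAddGroup.mk (𝟙 X.A))) =
      (Fobj Y).map X.ρ.op (φ'.app (op X.A) (QuotientAddGroup.mk (𝟙 X.A))) := hnat
  have h1 : (Fobj X).map X.ρ.op (QuotientAddGroup.mk (𝟙 X.A)) =
      (0 : (Fobj X).obj (op X.R)) := by
    rw [Fobj_map_mk]
    show QuotientAddGroup.mk' (sub X X.R) (X.ρ ≫ 𝟙 X.A) = 0
    rw [QuotientAddGroup.mk'_apply, QuotientAddGroup.eq_zero_iff]
    exact ⟨𝟙 X.R, by show 𝟙 X.R ≫ X.ρ = X.ρ ≫ 𝟙 X.A; simp⟩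
  rw [h1, map_zero] at hnat
  rw [← ha, QuotientAddGroup.mk'_apply] at hnat
  have h2 : (Fobj Y).map X.ρ.op (QuotientAddGroup.mk a) =
      QuotientAddGroup.mk (X.ρ ≫ a) := rfl
  rw [h2] at hnat
  replace hnat : QuotientAddGroup.mk' (sub Y X.R) (X.ρ ≫ a) = 0 := hnat.symm
  rw [QuotientAddGroup.mk'_apply, QuotientAddGroup.eq_zero_iff] at hnat
  obtain ⟨w, hw⟩ := hnat
  let α : X ⟶ Y := ⟨a, w, hw.symm⟩
  have key : ((G1 (P := P)).map α).hom = φ' := by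
    apply NatTrans.ext
    funext T
    ext x
    obtain ⟨m, rfl⟩ := QuotientAddGroup.mk'_surjective _ x
    have hnat2 := congrArg (fun (ψ : (Fobj X).obj (op X.A) ⟶ (Fobj Y).obj T) =>
      ψ (QuotientAddGroup.mk (𝟙 X.A))) (φ'.naturality (m.op : op X.A ⟶ T))
    replace hnat2 : φ'.app T ((Fobj X).map m.op (QuotientAddGroup.mk (𝟙 X.A))) =
        (Fobj Y).map m.op (φ'.app (op X.A) (QuotientAddGroup.mk (𝟙 X.A))) := hnat2
    have e1 : (Fobj X).map m.op (QuotientAddGroup.mk (𝟙 X.A)) =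
        QuotientAddGroup.mk m := by
      rw [Fobj_map_mk]; rw [Category.comp_id]; rfl
    have e2 : (Fobj Y).map m.op (φ'.app (op X.A) (QuotientAddGroup.mk (𝟙 X.A))) =
        QuotientAddGroup.mk (m ≫ a) := by
      rw [← ha]
      rfl
    rw [e1, e2] at hnat2
    exact hnat2.symm
  exact ⟨(Freyd.Q P).map α, InducedCategory.hom_ext key⟩


instance : (L (P := P)).EssSurj := by
  constructor
  rintro ⟨F, hadd, A, B, g, π, hz, hepi, hex⟩
  let Z : FreydObj P := ⟨B, A, g⟩
  have vanish : ∀ (T : Pᵒᵖ) (x : T.unop ⟶ A), x ∈ sub Z T.unop → π.app T x = 0 := by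
    intro T x hx
    obtain ⟨w, hw⟩ := hx
    have h0 : (preadditiveYoneda.map g ≫ π).app T w = 0 := by
      rw [hz]; rfl
    replace h0 : π.app T (w ≫ g) = 0 := h0
    rw [← hw]
    exact h0
  let θ : Fobj Z ⟶ F :=
    { app := fun T => AddCommGrpCat.ofHom (QuotientAddGroup.lift (sub Z T.unop)
        (π.app T).hom (vanish T))
      naturality := by
        intro T T' h
        ext x
        obtain ⟨m, rfl⟩ := QuotientAddGroup.mk'_surjective _ x
        have hπ : π.app T' ((preadditiveYoneda.obj A).map h m) =
            F.map h (π.app T m) := by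
          have := congrArg (fun (ψ : (preadditiveYoneda.obj A).obj T ⟶ F.obj T') =>
            ψ m) (π.naturality h)
          exact this
        exact hπ }
  haveI : ∀ T, IsIso (θ.app T) := by
    intro T
    haveI : Epi (π.app T) := inferInstance
    rw [ConcreteCategory.isIso_iff_bijective]
    constructor
    · intro x y hxy
      obtain ⟨m, rfl⟩ := QuotientAddGroup.mk'_surjective _ x
      obtain ⟨m', rfl⟩ := QuotientAddGroup.mk'_surjective _ y
      have hd : π.app T (m - m') = 0 := by
        replace hxy : π.app T m = π.app T m' := hxy
        exact (map_sub (π.app T).hom m m').trans (sub_eq_zero.mpr hxy)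
      have hexT := (exact_iff_eval _).mp hex T
      rw [ShortComplex.ab_exact_iff] at hexT
      obtain ⟨w, hw⟩ := hexT (m - m') hd
      rw [QuotientAddGroup.mk'_apply, QuotientAddGroup.mk'_apply]
      show (QuotientAddGroup.mk m : (unop T ⟶ Z.A) ⧸ sub Z T.unop) = QuotientAddGroup.mk m'
      rw [QuotientAddGroup.eq_iff_sub_mem]
      exact ⟨w, hw⟩
    · intro y
      obtain ⟨x, hx⟩ := (AddCommGrpCat.epi_iff_surjective (π.app T)).mp inferInstance y
      exact ⟨QuotientAddGroup.mk x, hx⟩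
  haveI : IsIso θ := NatIso.isIso_of_isIso_app θ
  refine ⟨(Freyd.Q P).obj Z, ⟨(ObjectProperty.ι _).preimageIso (asIso θ : Fobj Z ≅ F)⟩⟩

end FreydFP



end Construction

/-- the Freyd category `A(P)` is equivalent to the category of finitely
presented contravariant functors `Pᵒᵖ ⥤ Ab`, i.e. the full subcategory of additive
functors admitting a presentation `Hom(−, B) ⟶ Hom(−, A) ⟶ F ⟶ 0`. -/
theorem freyd_equiv_fp_functors (P : Type u) [Category.{v} P] [Preadditive P] :
    Nonempty (Freyd P ≌
      ObjectProperty.FullSubcategory (fun F : Pᵒᵖ ⥤ AddCommGrpCat.{v} =>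
        F.Additive ∧ IsFinitelyPresentedFunctor F)) := by
  haveI : (FreydFP.L (P := P)).IsEquivalence := {}
  exact ⟨(FreydFP.L (P := P)).asEquivalence⟩
end

section
/- Let P be an additive category equipped with a B-homomorphism structure (1, H, ν), where B is an additive category with finite biproducts, and consider a linear system in P given by objects A_i, D_i (1 ≤ i ≤ m), B_j, C_j (1 ≤ j ≤ n) and morphisms α_ij : A_i → B_j, β_ij : C_j → D_i, γ_i : A_i → D_i. Then a family (X_j : B_j → C_j)_{j=1,…,n} is a solution of the system, i.e. Σ_{j=1}^n β_ij ∘ X_j ∘ α_ij = γ_i for all i, if and only if the morphism (ν(X_j))_j : 1 → ⊕_{j=1}^n H(B_j, C_j), composed with the matrix morphism (H(α_ij, β_ij))_{ij} : ⊕_{j=1}^n H(B_j, C_j) → ⊕_{i=1}^m H(A_i, D_i), equals (ν(γ_i))_i : 1 → ⊕_{i=1}^m H(A_i, D_i). In particular, the system admits a solution if and only if (ν(γ_i))_i factors through (H(α_ij, β_ij))_{ij} in B. -/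
open CategoryTheory Limits Opposite

set_option linter.unusedSectionVars false

universe v u

universe v₂ u₂

/-- A `B`-homomorphism structure on an additive category `P`: a distinguished object
`one`, a bifunctor `H : Pᵒᵖ ⥤ P ⥤ B` additive in each variable, and natural isomorphisms
of abelian groups `ν : (X ⟶ Y) ≃+ (one ⟶ H X Y)`. -/
structure HomStructure (P : Type u) [Category.{v} P] [Preadditive P]
    (B : Type u₂) [Category.{v₂} B] [Preadditive B] where
  one : B
  H : Pᵒᵖ ⥤ P ⥤ B
  additive₁ : H.Additive
  additive₂ : ∀ X : Pᵒᵖ, (H.obj X).Additive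
  ν : ∀ X Y : P, (X ⟶ Y) ≃+ (one ⟶ (H.obj (Opposite.op X)).obj Y)
  naturality : ∀ {X' X Y Y' : P} (a : X' ⟶ X) (f : X ⟶ Y) (b : Y ⟶ Y'),
    ν X' Y' (a ≫ f ≫ b) =
      ν X Y f ≫ (H.map a.op).app Y ≫ (H.obj (Opposite.op X')).map b

/-- The action of the bifunctor of a homomorphism structure on a pair of morphisms
`a : X' ⟶ X` (contravariant slot) and `b : Y ⟶ Y'` (covariant slot). -/
def HomStructure.Hbi {P : Type u} [Category.{v} P] [Preadditive P]
    {B : Type u₂} [Category.{v₂} B] [Preadditive B] (S : HomStructure P B)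
    {X' X Y Y' : P} (a : X' ⟶ X) (b : Y ⟶ Y') :
    (S.H.obj (Opposite.op X)).obj Y ⟶ (S.H.obj (Opposite.op X')).obj Y' :=
  (S.H.map a.op).app Y ≫ (S.H.obj (Opposite.op X')).map b

/-- solving a linear system `∑ⱼ αᵢⱼ ⬝ Xⱼ ⬝ βᵢⱼ = γᵢ` in `P` is the same as
lifting `(ν γᵢ)ᵢ : 1 ⟶ ⨁ᵢ H(Aᵢ, Dᵢ)` along the matrix morphism
`(H(αᵢⱼ, βᵢⱼ))ᵢⱼ : ⨁ⱼ H(Bⱼ, Cⱼ) ⟶ ⨁ᵢ H(Aᵢ, Dᵢ)` in `B`. -/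
theorem linear_system_iff_lift (P : Type u) [Category.{v} P] [Preadditive P]
    (B : Type u₂) [Category.{v₂} B] [Preadditive B] [HasFiniteBiproducts B]
    (S : HomStructure P B) (m n : ℕ)
    (A D : Fin m → P) (Bo C : Fin n → P)
    (α : ∀ i j, A i ⟶ Bo j) (β : ∀ i j, C j ⟶ D i) (γ : ∀ i, A i ⟶ D i) :
    (∀ X : ∀ j, Bo j ⟶ C j,
      (∀ i, (∑ j, α i j ≫ X j ≫ β i j) = γ i) ↔
        biproduct.lift (fun j => S.ν (Bo j) (C j) (X j)) ≫
            biproduct.matrix (fun j i => S.Hbi (α i j) (β i j)) =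
          biproduct.lift (fun i => S.ν (A i) (D i) (γ i))) ∧
    ((∃ X : ∀ j, Bo j ⟶ C j, ∀ i, (∑ j, α i j ≫ X j ≫ β i j) = γ i) ↔
      ∃ φ : S.one ⟶ ⨁ (fun j => (S.H.obj (Opposite.op (Bo j))).obj (C j)),
        φ ≫ biproduct.matrix (fun j i => S.Hbi (α i j) (β i j)) =
          biproduct.lift (fun i => S.ν (A i) (D i) (γ i))) := by
  have comp : ∀ (X : ∀ j, Bo j ⟶ C j) (i : Fin m),
      biproduct.lift (fun j => S.ν (Bo j) (C j) (X j)) ≫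
          biproduct.matrix (fun j i => S.Hbi (α i j) (β i j)) ≫ biproduct.π _ i =
        S.ν (A i) (D i) (∑ j, α i j ≫ X j ≫ β i j) := by
    intro X i
    rw [biproduct.matrix_π, biproduct.lift_desc, map_sum]
    refine Finset.sum_congr rfl fun j _ => ?_
    rw [S.naturality]
    rfl
  have key : ∀ X : ∀ j, Bo j ⟶ C j,
      (∀ i, (∑ j, α i j ≫ X j ≫ β i j) = γ i) ↔
        biproduct.lift (fun j => S.ν (Bo j) (C j) (X j)) ≫
            biproduct.matrix (fun j i => S.Hbi (α i j) (β i j)) =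
          biproduct.lift (fun i => S.ν (A i) (D i) (γ i)) := by
    intro X
    constructor
    · intro h
      ext i
      rw [Category.assoc, comp X i, h i, biproduct.lift_π]
    · intro h i
      have := congrArg (· ≫ biproduct.π _ i) h
      simp only [Category.assoc, biproduct.lift_π] at this
      rw [comp X i] at this
      exact (S.ν (A i) (D i)).injective this
  refine ⟨key, ?_⟩
  constructor
  · rintro ⟨X, hX⟩
    exact ⟨_, (key X).1 hX⟩
  · rintro ⟨φ, hφ⟩
    refine ⟨fun j => (S.ν (Bo j) (C j)).symm (φ ≫ biproduct.π _ j), (key _).2 ?_⟩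
    have : biproduct.lift (fun j => S.ν (Bo j) (C j)
        ((S.ν (Bo j) (C j)).symm (φ ≫ biproduct.π _ j))) = φ := by
      ext j
      simp
    rw [this, hφ]
end

section
/- Let A be an abelian category with enough projectives. Let ρ_A : A → R_A be a morphism of A, regarded as an object of the Freyd category A(A^op). Choose an epimorphism ε_Q : Q → R_A with Q projective, and an epimorphism ε_P : P → A ×_{R_A} Q with P projective, where A ×_{R_A} Q is the pullback of ρ_A : A → R_A and ε_Q : Q → R_A, with projections pr_A and pr_Q. Set ρ_P := pr_Q ∘ ε_P : P → Q. Then the morphism of A(A^op) from the object (ρ_A : A → R_A) to the object (ρ_P : P → Q), represented by the A-morphism pr_A ∘ ε_P : P → A (with witness ε_Q), is a monomorphism in A(A^op), and (ρ_P : P → Q) is an injective object of A(A^op). -/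
open CategoryTheory Limits Opposite

set_option linter.unusedSectionVars false

universe v u

section Aux

variable {A : Type u} [Category.{v} A] [Abelian A]

/-- Key lemma for the mono part: if `b` and `lam` agree on the pullback of `ρA` and the
epimorphism `εQ`, then `b` factors through `ρA`. -/
lemma freyd_aux_desc {A₀ RA Q B : A} (ρA : A₀ ⟶ RA) (εQ : Q ⟶ RA) [Epi εQ]
    (b : A₀ ⟶ B) (lam : Q ⟶ B)
    (h : pullback.fst ρA εQ ≫ b = pullback.snd ρA εQ ≫ lam) :
    ∃ μ : RA ⟶ B, ρA ≫ μ = b := by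
  let d : A₀ ⊞ Q ⟶ RA := biprod.desc ρA (-εQ)
  haveI : Epi d := by
    have h2 : Epi (-εQ) := by
      have he : (-εQ) = εQ ≫ (-𝟙 RA) := by simp
      rw [he]; infer_instance
    exact epi_of_epi_fac (biprod.inr_desc ρA (-εQ))
  let φ : A₀ ⊞ Q ⟶ B := biprod.desc b (-lam)
  have hker : kernel.ι d ≫ φ = 0 := by
    obtain ⟨u, hu⟩ := KernelFork.IsLimit.lift'
      (Abelian.PullbackToBiproductIsKernel.isLimitPullbackToBiproduct ρA εQ)
      (kernel.ι d) (kernel.condition d)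
    have hι : Fork.ι (Abelian.PullbackToBiproductIsKernel.pullbackToBiproductFork ρA εQ) =
        Abelian.PullbackToBiproductIsKernel.pullbackToBiproduct ρA εQ := rfl
    have h3 : Abelian.PullbackToBiproductIsKernel.pullbackToBiproduct ρA εQ ≫ φ = 0 := by
      show biprod.lift (pullback.fst ρA εQ) (pullback.snd ρA εQ) ≫ biprod.desc b (-lam) = 0
      rw [biprod.lift_desc, Preadditive.comp_neg, h, add_neg_cancel]
    rw [← hu, hι, Category.assoc, h3, comp_zero]
  refine ⟨Abelian.epiDesc d φ hker, ?_⟩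
  have h4 : biprod.inl ≫ d ≫ Abelian.epiDesc d φ hker = biprod.inl ≫ φ := by
    rw [Abelian.comp_epiDesc]
  rw [← Category.assoc] at h4
  simpa only [d, φ, biprod.inl_desc] using h4

/-- Key lemma for the injective part: extending a map `p` (with witness `q`) along `c`,
given a splitting `ε` of the pushout inclusion coming from monomorphy in the Freyd
category. -/
lemma freyd_aux_inj {Pp Q B SB C SC : A} (ρP : Pp ⟶ Q)
    (hP : Projective Pp) (hQ : Projective Q)
    (σB : B ⟶ SB) (σC : C ⟶ SC) (c : C ⟶ B)
    (p : Pp ⟶ B) (q : Q ⟶ SB) (hpq : p ≫ σB = ρP ≫ q)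
    (ε : SB ⟶ pushout σC c) (hε : σB ≫ ε = pushout.inr σC c) :
    ∃ (p' : Pp ⟶ C) (q' : Q ⟶ SC) (lam : Q ⟶ B),
      p' ≫ σC = ρP ≫ q' ∧ p' ≫ c = p + ρP ≫ lam := by
  haveI := hP; haveI := hQ
  let π : SC ⊞ B ⟶ pushout σC c :=
    Abelian.BiproductToPushoutIsCokernel.biproductToPushout σC c
  let eC : C ⟶ SC ⊞ B := biprod.lift σC (-c)
  haveI : Epi π := by
    constructor
    intro T u v huv
    apply pushout.hom_ext
    · have h1 := biprod.inl ≫= huv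
      simpa [π] using h1
    · have h1 := biprod.inr ≫= huv
      simpa [π] using h1
  let s : Q ⟶ SC ⊞ B := Projective.factorThru (q ≫ ε) π
  have hs : s ≫ π = q ≫ ε := Projective.factorThru_comp _ _
  let θ : Pp ⟶ SC ⊞ B := biprod.lift 0 p - ρP ≫ s
  have hθ : θ ≫ π = 0 := by
    have h1 : biprod.lift (0 : Pp ⟶ SC) p ≫ π = p ≫ pushout.inr σC c := by
      show biprod.lift (0 : Pp ⟶ SC) p ≫
        biprod.desc (pushout.inl σC c) (pushout.inr σC c) = _
      rw [biprod.lift_desc, zero_comp, zero_add]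
    have h2 : p ≫ pushout.inr σC c = ρP ≫ s ≫ π := by
      rw [hs, ← hε, ← Category.assoc, hpq, Category.assoc]
    show (biprod.lift 0 p - ρP ≫ s) ≫ π = 0
    rw [Preadditive.sub_comp, h1, h2, Category.assoc, sub_self]
  obtain ⟨d', hd'⟩ := CokernelCofork.IsColimit.desc'
    (Abelian.BiproductToPushoutIsCokernel.isColimitBiproductToPushout σC c)
    (cokernel.π eC) (cokernel.condition eC)
  have hθ2 : θ ≫ cokernel.π eC = 0 := by
    have : (Cofork.π (Abelian.BiproductToPushoutIsCokernel.biproductToPushoutCofork σC c)) = π :=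
      rfl
    rw [← hd', this, ← Category.assoc, hθ, zero_comp]
  let k : Pp ⟶ Abelian.image eC := kernel.lift (cokernel.π eC) θ hθ2
  let p0 : Pp ⟶ C := Projective.factorThru k (Abelian.factorThruImage eC)
  have hfac : p0 ≫ Abelian.factorThruImage eC = k := Projective.factorThru_comp _ _
  have hp0 : p0 ≫ eC = θ := by
    calc p0 ≫ eC = p0 ≫ Abelian.factorThruImage eC ≫ Abelian.image.ι eC := by
          rw [Abelian.image.fac]
      _ = k ≫ Abelian.image.ι eC := by rw [← Category.assoc, hfac]
      _ = θ := kernel.lift_ι _ _ _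
  have hfst := hp0 =≫ biprod.fst
  have hsnd := hp0 =≫ biprod.snd
  simp only [eC, θ, Category.assoc, biprod.lift_fst, biprod.lift_snd,
    Preadditive.sub_comp, Preadditive.comp_neg, zero_comp] at hfst hsnd
  refine ⟨-p0, s ≫ biprod.fst, -(s ≫ biprod.snd), ?_, ?_⟩
  · rw [Preadditive.neg_comp, hfst]
    simp
  · rw [Preadditive.neg_comp, hsnd]
    simp only [Preadditive.comp_neg]
    abel

end Aux

/-- let `A` be abelian with enough projectives, `ρ_A : A ⟶ R_A` a morphism
of `A` viewed as an object of `A(Aᵒᵖ)`, `ε_Q : Q ⟶ R_A` an epimorphism with `Q`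
projective and `ε_P : P ⟶ A ×_{R_A} Q` an epimorphism with `P` projective; set
`ρ_P := pr_Q ∘ ε_P`.  Then the morphism `(ρ_A) ⟶ (ρ_P)` of `A(Aᵒᵖ)` represented by
`pr_A ∘ ε_P` (with witness `ε_Q`) is a monomorphism, and `(ρ_P : P ⟶ Q)` is an injective
object of `A(Aᵒᵖ)`. -/
theorem freyd_op_mono_into_injective (A : Type u) [Category.{v} A] [Abelian A]
    [EnoughProjectives A]
    {A₀ RA : A} (ρA : A₀ ⟶ RA)
    {Q : A} (εQ : Q ⟶ RA) [Epi εQ] (hQ : Projective Q)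
    {Pp : A} (εP : Pp ⟶ pullback ρA εQ) [Epi εP] (hP : Projective Pp) :
    Mono ((Freyd.Q Aᵒᵖ).map
      (X := ⟨Opposite.op RA, Opposite.op A₀, ρA.op⟩)
      (Y := ⟨Opposite.op Q, Opposite.op Pp, (εP ≫ pullback.snd ρA εQ).op⟩)
      ⟨(εP ≫ pullback.fst ρA εQ).op, ⟨εQ.op, by
        rw [← op_comp, ← op_comp]
        congr 1
        simp [pullback.condition]⟩⟩) ∧
    Injective ((Freyd.Q Aᵒᵖ).obj
      ⟨Opposite.op Q, Opposite.op Pp, (εP ≫ pullback.snd ρA εQ).op⟩) := by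
  constructor
  · -- the morphism is a monomorphism
    have key : ∀ (fm : (⟨Opposite.op RA, Opposite.op A₀, ρA.op⟩ : FreydObj Aᵒᵖ) ⟶
        ⟨Opposite.op Q, Opposite.op Pp, (εP ≫ pullback.snd ρA εQ).op⟩),
        fm.1 = (εP ≫ pullback.fst ρA εQ).op → Mono ((Freyd.Q Aᵒᵖ).map fm) := ?_
    · exact key _ rfl
    intro fm hfm
    apply Preadditive.mono_of_cancel_zero
    intro T g hg
    obtain ⟨T⟩ := T
    obtain ⟨u, rfl⟩ := (Freyd.Q Aᵒᵖ).map_surjective g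
    have h0 : (Freyd.Q Aᵒᵖ).map (u ≫ fm) = (Freyd.Q Aᵒᵖ).map 0 := by
      rw [Functor.map_comp, hg]; rfl
    rw [Quotient.functor_map_eq_iff] at h0
    obtain ⟨l, hl⟩ := h0
    simp only [FreydObj.comp_val, FreydObj.zero_val, sub_zero, hfm] at hl
    have hl' := congrArg Quiver.Hom.unop hl
    simp only [unop_comp, Quiver.Hom.unop_op] at hl'
    -- hl' : (εP ≫ pullback.snd) ≫ l.unop = (εP ≫ pullback.fst) ≫ u.1.unop
    have hl'' : pullback.fst ρA εQ ≫ u.1.unop = pullback.snd ρA εQ ≫ l.unop := by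
      have := hl'
      rw [Category.assoc, Category.assoc] at this
      exact ((cancel_epi εP).1 this).symm
    obtain ⟨μ, hμ⟩ := freyd_aux_desc ρA εQ u.1.unop l.unop hl''
    have : (Freyd.Q Aᵒᵖ).map u = (Freyd.Q Aᵒᵖ).map 0 := by
      rw [Quotient.functor_map_eq_iff]
      refine ⟨μ.op, ?_⟩
      apply Quiver.Hom.unop_inj
      simp only [FreydObj.zero_val, sub_zero, unop_comp, Quiver.Hom.unop_op]
      exact hμ
    rw [this]; rfl
  · -- the target is an injective object
    constructor
    intro W Z g m hm
    obtain ⟨W⟩ := W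
    obtain ⟨Z⟩ := Z
    obtain ⟨m₀, rfl⟩ := (Freyd.Q Aᵒᵖ).map_surjective m
    obtain ⟨h₀, rfl⟩ := (Freyd.Q Aᵒᵖ).map_surjective g
    -- notation in `A`
    set B := W.A.unop with hB
    set SB := W.R.unop with hSB
    set σB : B ⟶ SB := W.ρ.unop with hσB
    set C := Z.A.unop with hC
    set SC := Z.R.unop with hSC
    set σC : C ⟶ SC := Z.ρ.unop with hσC
    set c : C ⟶ B := m₀.1.unop with hc
    -- the test object coming from the pushout
    set D := pushout σC c with hD
    set β : B ⟶ D := pushout.inr σC c with hβ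
    set T : FreydObj Aᵒᵖ :=
      ⟨Opposite.op (pushout σB β), Opposite.op D, (pushout.inr σB β).op⟩ with hT
    have hucond : T.ρ ≫ (β.op : T.A ⟶ W.A) = (pushout.inl σB β).op ≫ W.ρ := by
      apply Quiver.Hom.unop_inj
      simp only [unop_comp, Quiver.Hom.unop_op]
      exact pushout.condition.symm
    set u : T ⟶ W := ⟨β.op, ⟨(pushout.inl σB β).op, hucond⟩⟩ with hu
    have h1 : (Freyd.Q Aᵒᵖ).map (u ≫ m₀) = (Freyd.Q Aᵒᵖ).map (0 ≫ m₀) := by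
      rw [Quotient.functor_map_eq_iff]
      refine ⟨(pushout.inl σC c).op, ?_⟩
      apply Quiver.Hom.unop_inj
      simp only [FreydObj.comp_val, FreydObj.zero_val, zero_comp, sub_zero, unop_comp,
        Quiver.Hom.unop_op]
      exact pushout.condition
    rw [Functor.map_comp, Functor.map_comp] at h1
    have h2 := (cancel_mono ((Freyd.Q Aᵒᵖ).map m₀)).1 h1
    rw [Quotient.functor_map_eq_iff] at h2
    obtain ⟨l, hl⟩ := h2
    simp only [FreydObj.zero_val, sub_zero] at hl
    have hε : σB ≫ l.unop = β := by
      have := congrArg Quiver.Hom.unop hl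
      simp only [unop_comp, Quiver.Hom.unop_op] at this; exact this
    -- data of the map to be extended
    obtain ⟨w, hw⟩ := h₀.2
    have hpq : h₀.1.unop ≫ σB = (εP ≫ pullback.snd ρA εQ) ≫ w.unop := by
      have := congrArg Quiver.Hom.unop hw
      simpa only [unop_comp, Quiver.Hom.unop_op] using this
    obtain ⟨p', q', lam, h3, h4⟩ := freyd_aux_inj (εP ≫ pullback.snd ρA εQ) hP hQ
      σB σC c h₀.1.unop w.unop hpq l.unop hε
    have hgcond : Z.ρ ≫ (p'.op : Z.A ⟶ Opposite.op Pp) =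
        q'.op ≫ (εP ≫ pullback.snd ρA εQ).op := by
      apply Quiver.Hom.unop_inj
      simp only [unop_comp, Quiver.Hom.unop_op]
      exact h3
    refine ⟨(Freyd.Q Aᵒᵖ).map ⟨p'.op, ⟨q'.op, hgcond⟩⟩, ?_⟩
    rw [← Functor.map_comp, Quotient.functor_map_eq_iff]
    refine ⟨lam.op, ?_⟩
    apply Quiver.Hom.unop_inj
    simp only [FreydObj.comp_val, unop_comp, Quiver.Hom.unop_op, sub_eq_add_neg, unop_add,
      unop_neg]
    rw [h4]
    abel
end

section
/- Let A be an abelian category with enough projectives and let ρ_A : A → R_A be a morphism of A, regarded as an object of the Freyd category A(A^op). Let F : A → Ab be the corresponding finitely presented covariant functor, namely the cokernel of the natural transformation Hom_A(R_A, −) → Hom_A(A, −) induced by ρ_A. With ε_Q : Q → R_A an epimorphism from a projective Q, ε_P : P → A ×_{R_A} Q an epimorphism from a projective P (pullback of ρ_A and ε_Q), and ρ_P := pr_Q ∘ ε_P, the monomorphism of A(A^op) from (ρ_A : A → R_A) to (ρ_P : P → Q) represented by pr_A ∘ ε_P splits (admits a retraction) if and only if F is right exact. Equivalently, F is right exact if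 and only if (ρ_A : A → R_A) is an injective object of A(A^op). -/
open CategoryTheory Limits Opposite

set_option linter.unusedSectionVars false

universe v u

section Aux
variable {A : Type u} [Category.{v} A] [Abelian A]

namespace FreydAux

lemma ab_cofork {X Y Z : AddCommGrpCat.{v}} (f : X ⟶ Y) (g : Y ⟶ Z)
    (w : f ≫ g = 0) (hc : IsColimit (CokernelCofork.ofπ g w)) :
    Function.Surjective g ∧ ∀ y : Y, g y = 0 → ∃ x : X, f x = y := by
  have hS : (ShortComplex.mk f g w).Exact := ShortComplex.exact_of_g_is_cokernel _ hc
  exact ⟨(AddCommGrpCat.epi_iff_surjective _).1 (epi_of_isColimit_cofork hc),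
    (ShortComplex.ab_exact_iff _).1 hS⟩

variable {A₀ RA : A} (ρ : A₀ ⟶ RA)

noncomputable abbrev FF : A ⥤ AddCommGrpCat.{v} := cokernel (preadditiveCoyoneda.map ρ.op)
noncomputable abbrev FFπ : preadditiveCoyoneda.obj (op A₀) ⟶ FF ρ := cokernel.π _

lemma FF_pointwise (X : A) :
    (∀ z : (FF ρ).obj X, ∃ x : A₀ ⟶ X, ((FFπ ρ).app X) x = z) ∧
    (∀ x : A₀ ⟶ X, ((FFπ ρ).app X) x = 0 → ∃ k : RA ⟶ X, ρ ≫ k = x) := by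
  have hco := isColimitCoforkMapOfIsColimit' ((evaluation A AddCommGrpCat.{v}).obj X)
    (cokernel.condition (preadditiveCoyoneda.map ρ.op))
    (cokernelIsCokernel (preadditiveCoyoneda.map ρ.op))
  obtain ⟨hs, hk⟩ := ab_cofork _ _ _ hco
  constructor
  · intro z
    obtain ⟨x, hx⟩ := hs z
    exact ⟨x, hx⟩
  · intro x hx
    obtain ⟨k, hkk⟩ := hk x hx
    exact ⟨k, hkk⟩

lemma FF_map_π {X Y : A} (u : X ⟶ Y) (x : A₀ ⟶ X) :
    (FF ρ).map u (((FFπ ρ).app X) x) = ((FFπ ρ).app Y) (x ≫ u) := by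
  have h := congrArg (fun (t : (preadditiveCoyoneda.obj (op A₀)).obj X ⟶ (FF ρ).obj Y)
    => t x) ((FFπ ρ).naturality u)
  erw [← h]
  rfl

section LemmaA

lemma FFπ_rel_zero {X : A} (k : RA ⟶ X) : ((FFπ ρ).app X) (ρ ≫ k) = 0 := by
  have h := congrArg (fun (t : preadditiveCoyoneda.obj (op RA) ⟶ FF ρ) => (t.app X) k)
    (cokernel.condition (preadditiveCoyoneda.map ρ.op))
  simp only [NatTrans.comp_app] at h
  rw [show (0 : preadditiveCoyoneda.obj (op RA) ⟶ FF ρ).app X = 0 from rfl] at h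
  exact h

lemma FF_preservesZero : (FF ρ).PreservesZeroMorphisms := by
  constructor
  intro X Y
  apply AddCommGrpCat.ext
  intro z
  obtain ⟨x, rfl⟩ := (FF_pointwise ρ X).1 z
  rw [FF_map_π]
  simp
  erw [map_zero]

lemma FF_preservesFiniteColimits (hA : Projective A₀) (hR : Projective RA) :
    PreservesFiniteColimits (FF ρ) := by
  haveI := FF_preservesZero ρ
  haveI : ∀ {X Y : A} (u : X ⟶ Y), PreservesColimit (parallelPair u 0) (FF ρ) := by
    intro X Y u
    have w' : (FF ρ).map u ≫ (FF ρ).map (cokernel.π u) = 0 := by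
      rw [← Functor.map_comp, cokernel.condition, Functor.map_zero]
    have hexact : (ShortComplex.mk ((FF ρ).map u) ((FF ρ).map (cokernel.π u)) w').Exact := by
      rw [ShortComplex.ab_exact_iff]
      intro z hz
      obtain ⟨x, rfl⟩ := (FF_pointwise ρ Y).1 z
      rw [show (ShortComplex.mk ((FF ρ).map u) ((FF ρ).map (cokernel.π u)) w').g
        = (FF ρ).map (cokernel.π u) from rfl, FF_map_π] at hz
      obtain ⟨k, hk⟩ := (FF_pointwise ρ (cokernel u)).2 _ hz
      -- lift k through cokernel.π u
      set k' : RA ⟶ Y := Projective.factorThru k (cokernel.π u) with hk'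
      have hkfac : k' ≫ cokernel.π u = k := Projective.factorThru_comp _ _
      set w : A₀ ⟶ Y := x - ρ ≫ k' with hw
      have hw0 : w ≫ cokernel.π u = 0 := by
        rw [hw, Preadditive.sub_comp, Category.assoc, hkfac, hk, sub_self]
      set z' : A₀ ⟶ kernel (cokernel.π u) := kernel.lift (cokernel.π u) w hw0 with hz'
      have hz'fac : z' ≫ kernel.ι (cokernel.π u) = w := kernel.lift_ι _ _ _
      set z₀ : A₀ ⟶ X := Projective.factorThru z' (Abelian.factorThruImage u) with hz₀
      have hz₀fac : z₀ ≫ Abelian.factorThruImage u = z' := Projective.factorThru_comp _ _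
      have hzu : z₀ ≫ u = w := by
        rw [← Abelian.image.fac u, ← Category.assoc, hz₀fac]
        exact hz'fac
      refine ⟨((FFπ ρ).app X) z₀, ?_⟩
      show (FF ρ).map u (((FFπ ρ).app X) z₀) = _
      rw [FF_map_π, hzu, hw]
      erw [map_sub, FFπ_rel_zero, sub_zero]
    haveI : Epi (ShortComplex.mk ((FF ρ).map u) ((FF ρ).map (cokernel.π u)) w').g := by
      rw [AddCommGrpCat.epi_iff_surjective]
      intro z
      obtain ⟨x, rfl⟩ := (FF_pointwise ρ (cokernel u)).1 z
      refine ⟨((FFπ ρ).app Y) (Projective.factorThru x (cokernel.π u)), ?_⟩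
      show (FF ρ).map (cokernel.π u) _ = _
      rw [FF_map_π, Projective.factorThru_comp]
    have hco' : IsColimit (CokernelCofork.ofπ ((FF ρ).map (cokernel.π u)) w') :=
      hexact.gIsCokernel
    exact preservesColimit_of_preserves_colimit_cocone (cokernelIsCokernel u)
      ((isColimitMapCoconeCoforkEquiv' (FF ρ) (cokernel.condition u)).symm hco')
  exact Functor.preservesFiniteColimits_of_preservesCokernels (FF ρ)

end LemmaA


section Retract

lemma post_square {J : Type} [SmallCategory J] (K : J ⥤ A) [HasColimit K]
    {F G : A ⥤ AddCommGrpCat.{v}} (σ : F ⟶ G) [HasColimit (K ⋙ F)] [HasColimit (K ⋙ G)] :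
    colimMap (Functor.whiskerLeft K σ) ≫ colimit.post K G = colimit.post K F ≫ σ.app (colimit K) := by
  apply colimit.hom_ext
  intro j
  rw [← Category.assoc, ι_colimMap, Category.assoc, colimit.ι_post, ← Category.assoc,
    colimit.ι_post]
  exact (σ.naturality _).symm

lemma preservesFiniteColimits_of_retract {F G : A ⥤ AddCommGrpCat.{v}}
    (σ : F ⟶ G) (πr : G ⟶ F) (hσπ : σ ≫ πr = 𝟙 F) [PreservesFiniteColimits G] :
    PreservesFiniteColimits F := by
  constructor
  intro J _ _
  constructor
  intro K
  have h1 := post_square K σ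
  have h2 := post_square K πr
  have : IsIso (colimit.post K F) := by
    refine ⟨σ.app (colimit K) ≫ inv (colimit.post K G) ≫ colimMap (Functor.whiskerLeft K πr), ?_, ?_⟩
    · rw [← Category.assoc, ← h1, Category.assoc, IsIso.hom_inv_id_assoc,
        ]
      apply colimit.hom_ext
      intro j
      rw [ι_colimMap_assoc, ι_colimMap, Functor.whiskerLeft_app, Functor.whiskerLeft_app, ← Category.assoc,
        ← NatTrans.comp_app, hσπ]
      simp
    · rw [Category.assoc, Category.assoc, h2, ← Category.assoc (inv (colimit.post K G)),
        IsIso.inv_hom_id, Category.id_comp, ← NatTrans.comp_app, hσπ]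
      simp
  exact preservesColimit_of_isIso_post (F := K) (G := F)

end Retract

section Hom

/-- The natural transformation between fp functors induced by a morphism datum. -/
noncomputable def FFhom {A₀ RA B₀ RB : A} (ρA : A₀ ⟶ RA) (ρB : B₀ ⟶ RB)
    (g : B₀ ⟶ A₀) (e : RB ⟶ RA) (hsq : g ≫ ρA = ρB ≫ e) : FF ρA ⟶ FF ρB :=
  cokernel.map _ _ (preadditiveCoyoneda.map e.op) (preadditiveCoyoneda.map g.op) (by
    rw [← Functor.map_comp, ← Functor.map_comp, ← op_comp, ← op_comp, hsq])

lemma FFhom_π {A₀ RA B₀ RB : A} (ρA : A₀ ⟶ RA) (ρB : B₀ ⟶ RB)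
    (g : B₀ ⟶ A₀) (e : RB ⟶ RA) (hsq : g ≫ ρA = ρB ≫ e) (X : A) (x : A₀ ⟶ X) :
    (FFhom ρA ρB g e hsq).app X (((FFπ ρA).app X) x) = ((FFπ ρB).app X) (g ≫ x) := by
  have h : (FFπ ρA) ≫ (FFhom ρA ρB g e hsq) = preadditiveCoyoneda.map g.op ≫ FFπ ρB := by
    simp [FFhom, FFπ]
  have h2 := congrArg (fun (t : preadditiveCoyoneda.obj (op A₀) ⟶ FF ρB)
    => (t.app X) x) h
  simp only [NatTrans.comp_app] at h2
  exact h2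

lemma FFhom_retract {A₀ RA Pp Qq : A} (ρA : A₀ ⟶ RA) (ρP : Pp ⟶ Qq)
    (g : Pp ⟶ A₀) (e : Qq ⟶ RA) (h1 : g ≫ ρA = ρP ≫ e)
    (f : A₀ ⟶ Pp) (v : RA ⟶ Qq) (h2 : f ≫ ρP = ρA ≫ v)
    (m : RA ⟶ A₀) (h3 : ρA ≫ m = f ≫ g - 𝟙 A₀) :
    FFhom ρA ρP g e h1 ≫ FFhom ρP ρA f v h2 = 𝟙 (FF ρA) := by
  apply NatTrans.ext
  funext X
  apply AddCommGrpCat.ext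
  intro z
  obtain ⟨x, rfl⟩ := (FF_pointwise ρA X).1 z
  show (FFhom ρP ρA f v h2).app X ((FFhom ρA ρP g e h1).app X (((FFπ ρA).app X) x))
    = (𝟙 (FF ρA) : FF ρA ⟶ FF ρA).app X (((FFπ ρA).app X) x)
  rw [FFhom_π, FFhom_π]
  have hsub : f ≫ g ≫ x - x = ρA ≫ (m ≫ x) := by
    have h4 := congrArg (fun t => t ≫ x) h3
    simp only [Preadditive.sub_comp, Category.assoc, Category.id_comp] at h4
    exact h4.symm
  have key : ((FFπ ρA).app X) (f ≫ g ≫ x) - ((FFπ ρA).app X) x = 0 := by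
    erw [← map_sub, hsub, FFπ_rel_zero]
  have h5 := sub_eq_zero.mp key
  simpa using h5

end Hom

section Cofork

lemma pullback_epi_desc {X Y Z W : A} (f : X ⟶ Z) (g : Y ⟶ Z) [Epi g]
    (d : X ⟶ W) (l : Y ⟶ W) (h : pullback.fst f g ≫ d = pullback.snd f g ≫ l) :
    ∃ e : Z ⟶ W, f ≫ e = d := by
  have hepi : Epi (biprod.desc f (-g)) := by
    have h1 : biprod.inr ≫ biprod.desc f (-g) = g ≫ (-𝟙 Z) := by simp
    have : Epi (biprod.inr ≫ biprod.desc f (-g)) := by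
      rw [h1]; exact epi_comp _ _
    exact epi_of_epi biprod.inr _
  have hco : IsColimit (CokernelCofork.ofπ (biprod.desc f (-g))
      (KernelFork.condition (Abelian.PullbackToBiproductIsKernel.pullbackToBiproductFork f g))) :=
    Abelian.epiIsCokernelOfKernel _
      (Abelian.PullbackToBiproductIsKernel.isLimitPullbackToBiproduct f g)
  have ht : Abelian.PullbackToBiproductIsKernel.pullbackToBiproduct f g
      ≫ biprod.desc d (-l) = 0 := by
    rw [show Abelian.PullbackToBiproductIsKernel.pullbackToBiproduct f g
      = biprod.lift (pullback.fst f g) (pullback.snd f g) from rfl, biprod.lift_desc,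
      Preadditive.comp_neg, h, add_neg_cancel]
  obtain ⟨e, he⟩ := CokernelCofork.IsColimit.desc' hco (biprod.desc d (-l)) ht
  refine ⟨e, ?_⟩
  have h6 := congrArg (fun t => biprod.inl ≫ t) he
  simpa using h6

end Cofork

section Pushout

lemma pushout_biprod_cond {T₂ T₁ S₂ : A} (μ : T₂ ⟶ T₁) (σ₂ : T₂ ⟶ S₂) :
    biprod.lift μ (-σ₂) ≫ biprod.desc (pushout.inl μ σ₂) (pushout.inr μ σ₂) = 0 := by
  rw [biprod.lift_desc, Preadditive.neg_comp, pushout.condition, add_neg_cancel]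

noncomputable def pushout_cofork_isColimit {T₂ T₁ S₂ : A} (μ : T₂ ⟶ T₁) (σ₂ : T₂ ⟶ S₂) :
    IsColimit (CokernelCofork.ofπ (biprod.desc (pushout.inl μ σ₂) (pushout.inr μ σ₂))
      (pushout_biprod_cond μ σ₂)) := by
  apply CokernelCofork.IsColimit.ofπ _ _
    (fun {W} t ht => pushout.desc (biprod.inl ≫ t) (biprod.inr ≫ t) (by
      have h1 : (μ ≫ biprod.inl + (-σ₂) ≫ biprod.inr) ≫ t = 0 := by
        rw [← biprod.lift_eq]; exact ht
      simp only [Preadditive.add_comp, Preadditive.neg_comp, Category.assoc] at h1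
      rw [← sub_eq_add_neg, sub_eq_zero] at h1
      exact h1))
  · intro W t ht
    apply biprod.hom_ext'
    · rw [← Category.assoc, biprod.inl_desc, pushout.inl_desc]
    · rw [← Category.assoc, biprod.inr_desc, pushout.inr_desc]
  · intro W t ht d hd
    apply pushout.hom_ext
    · rw [pushout.inl_desc, ← biprod.inl_desc (pushout.inl μ σ₂) (pushout.inr μ σ₂),
        Category.assoc, hd]
    · rw [pushout.inr_desc, ← biprod.inr_desc (pushout.inl μ σ₂) (pushout.inr μ σ₂),
        Category.assoc, hd]

end Pushout

section CokerExact

lemma FF_coker_exact {A₀ RA : A} (ρ : A₀ ⟶ RA) (hPres : PreservesFiniteColimits (FF ρ))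
    {X Y Z : A} (φ : X ⟶ Y) (ψ : Y ⟶ Z) (w : φ ≫ ψ = 0)
    (hco : IsColimit (CokernelCofork.ofπ ψ w))
    (x : A₀ ⟶ Y) (hx : ((FFπ ρ).app Z) (x ≫ ψ) = 0) :
    ∃ (t : A₀ ⟶ X) (l : RA ⟶ Y), ρ ≫ l = t ≫ φ - x := by
  have hco' := isColimitCoforkMapOfIsColimit' (FF ρ) w hco
  obtain ⟨hs, hk⟩ := ab_cofork ((FF ρ).map φ) ((FF ρ).map ψ) _ hco'
  have h0 : (FF ρ).map ψ (((FFπ ρ).app Y) x) = 0 := by rw [FF_map_π]; exact hx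
  obtain ⟨y, hy⟩ := hk _ h0
  obtain ⟨t, rfl⟩ := (FF_pointwise ρ X).1 y
  rw [FF_map_π] at hy
  have h1 : ((FFπ ρ).app Y) (t ≫ φ - x) = 0 := by erw [map_sub, hy, sub_self]
  obtain ⟨l, hl⟩ := (FF_pointwise ρ Y).2 _ h1
  exact ⟨t, l, hl⟩

end CokerExact

section Main

theorem main_core {A₀ RA : A} (ρA : A₀ ⟶ RA)
    {Q : A} (εQ : Q ⟶ RA) [Epi εQ] (hQ : Projective Q)
    {Pp : A} (εP : Pp ⟶ pullback ρA εQ) [Epi εP] (hP : Projective Pp)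
    (ι' : (⟨Opposite.op RA, Opposite.op A₀, ρA.op⟩ : FreydObj Aᵒᵖ) ⟶
      ⟨Opposite.op Q, Opposite.op Pp, (εP ≫ pullback.snd ρA εQ).op⟩)
    (hι : ι'.1 = (εP ≫ pullback.fst ρA εQ).op) :
    ((∃ r : (Freyd.Q Aᵒᵖ).obj ⟨Opposite.op Q, Opposite.op Pp,
          (εP ≫ pullback.snd ρA εQ).op⟩ ⟶
        (Freyd.Q Aᵒᵖ).obj ⟨Opposite.op RA, Opposite.op A₀, ρA.op⟩,
      (Freyd.Q Aᵒᵖ).map ι' ≫ r =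
        𝟙 ((Freyd.Q Aᵒᵖ).obj ⟨Opposite.op RA, Opposite.op A₀, ρA.op⟩)) ↔
      Nonempty (PreservesFiniteColimits (FF ρA))) ∧
    (Nonempty (PreservesFiniteColimits (FF ρA)) ↔
      Injective ((Freyd.Q Aᵒᵖ).obj ⟨Opposite.op RA, Opposite.op A₀, ρA.op⟩)) := by
  have hgρ : (εP ≫ pullback.fst ρA εQ) ≫ ρA = (εP ≫ pullback.snd ρA εQ) ≫ εQ := by
    simp only [Category.assoc, pullback.condition]
  -- Step 1 : the canonical map is a monomorphism
  have hMono : Mono ((Freyd.Q Aᵒᵖ).map ι') := by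
    refine ⟨fun {Z₀} a b hab => ?_⟩
    obtain ⟨a', rfl⟩ := (Freyd.Q Aᵒᵖ).map_surjective a
    obtain ⟨b', rfl⟩ := (Freyd.Q Aᵒᵖ).map_surjective b
    rw [← Functor.map_comp, ← Functor.map_comp, Quotient.functor_map_eq_iff] at hab
    rw [Quotient.functor_map_eq_iff]
    obtain ⟨l, hl⟩ := hab
    have hrel : (εP ≫ pullback.snd ρA εQ) ≫ l.unop
        = (εP ≫ pullback.fst ρA εQ) ≫ (a'.1.unop - b'.1.unop) := by
      have h2 := congrArg Quiver.Hom.unop hl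
      simp only [FreydObj.comp_val, hι, unop_comp, Quiver.Hom.unop_op, sub_eq_add_neg,
        unop_add, unop_neg, Preadditive.comp_add, Preadditive.comp_neg] at h2 ⊢
      exact h2
    have hcanc : pullback.fst ρA εQ ≫ (a'.1.unop - b'.1.unop)
        = pullback.snd ρA εQ ≫ l.unop := by
      rw [Category.assoc, Category.assoc] at hrel
      exact ((cancel_epi εP).mp hrel).symm
    obtain ⟨e, he⟩ := pullback_epi_desc ρA εQ (a'.1.unop - b'.1.unop) l.unop hcanc
    refine ⟨e.op, ?_⟩
    apply Quiver.Hom.unop_inj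
    simp only [unop_comp, Quiver.Hom.unop_op, sub_eq_add_neg, unop_add, unop_neg]
    rw [← sub_eq_add_neg, ← he]
  -- Step 2 : splitting implies right exactness
  have hSE : (∃ r : (Freyd.Q Aᵒᵖ).obj ⟨Opposite.op Q, Opposite.op Pp,
          (εP ≫ pullback.snd ρA εQ).op⟩ ⟶
        (Freyd.Q Aᵒᵖ).obj ⟨Opposite.op RA, Opposite.op A₀, ρA.op⟩,
      (Freyd.Q Aᵒᵖ).map ι' ≫ r =
        𝟙 ((Freyd.Q Aᵒᵖ).obj ⟨Opposite.op RA, Opposite.op A₀, ρA.op⟩)) →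
      Nonempty (PreservesFiniteColimits (FF ρA)) := by
    rintro ⟨r, hr⟩
    obtain ⟨r', rfl⟩ := (Freyd.Q Aᵒᵖ).map_surjective r
    rw [← Functor.map_comp, show 𝟙 ((Freyd.Q Aᵒᵖ).obj
        (⟨Opposite.op RA, Opposite.op A₀, ρA.op⟩ : FreydObj Aᵒᵖ))
      = (Freyd.Q Aᵒᵖ).map (𝟙 (⟨Opposite.op RA, Opposite.op A₀, ρA.op⟩ : FreydObj Aᵒᵖ))
        from ((Freyd.Q Aᵒᵖ).map_id _).symm, Quotient.functor_map_eq_iff] at hr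
    obtain ⟨l, hl⟩ := hr
    obtain ⟨wv, hwv⟩ := r'.2
    have hfv : r'.1.unop ≫ (εP ≫ pullback.snd ρA εQ) = ρA ≫ wv.unop := by
      have h2 := congrArg Quiver.Hom.unop hwv
      simpa only [unop_comp, Quiver.Hom.unop_op] using h2
    have hm : ρA ≫ l.unop = r'.1.unop ≫ (εP ≫ pullback.fst ρA εQ) - 𝟙 A₀ := by
      have h2 := congrArg Quiver.Hom.unop hl
      simp only [FreydObj.comp_val, FreydObj.id_val, hι, unop_comp, Quiver.Hom.unop_op,
        sub_eq_add_neg, unop_add, unop_neg, unop_id] at h2 ⊢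
      exact h2
    haveI : PreservesFiniteColimits (FF (εP ≫ pullback.snd ρA εQ)) :=
      FF_preservesFiniteColimits _ hP hQ
    exact ⟨preservesFiniteColimits_of_retract
      (FFhom ρA (εP ≫ pullback.snd ρA εQ) (εP ≫ pullback.fst ρA εQ) εQ hgρ)
      (FFhom (εP ≫ pullback.snd ρA εQ) ρA r'.1.unop wv.unop hfv)
      (FFhom_retract ρA (εP ≫ pullback.snd ρA εQ) (εP ≫ pullback.fst ρA εQ) εQ hgρ
        r'.1.unop wv.unop hfv l.unop hm)⟩
  -- Step 3 : right exactness implies injectivity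
  have hEI : Nonempty (PreservesFiniteColimits (FF ρA)) →
      Injective ((Freyd.Q Aᵒᵖ).obj ⟨Opposite.op RA, Opposite.op A₀, ρA.op⟩) := by
    rintro ⟨hPres⟩
    refine ⟨fun {Z₁ Z₂} gJ mf hmf => ?_⟩
    obtain ⟨u', rfl⟩ := (Freyd.Q Aᵒᵖ).map_surjective gJ
    obtain ⟨m', rfl⟩ := (Freyd.Q Aᵒᵖ).map_surjective mf
    -- the mono condition, pointwise
    have key : ∀ (W : A) (a : Z₁.as.A.unop ⟶ W),
        (∃ e₂ : Z₂.as.R.unop ⟶ W, Z₂.as.ρ.unop ≫ e₂ = m'.1.unop ≫ a) →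
        ∃ e₁ : Z₁.as.R.unop ⟶ W, Z₁.as.ρ.unop ≫ e₁ = a := by
      rintro W a ⟨e₂, he₂⟩
      let Z₀ : FreydObj Aᵒᵖ := ⟨Opposite.op W, Opposite.op W, 0⟩
      let α : Z₀ ⟶ Z₁.as := ⟨a.op, ⟨0, by simp [Z₀]⟩⟩
      let β : Z₀ ⟶ Z₁.as := ⟨0, ⟨0, by simp⟩⟩
      have hQeq : (Freyd.Q Aᵒᵖ).map α ≫ (Freyd.Q Aᵒᵖ).map m'
          = (Freyd.Q Aᵒᵖ).map β ≫ (Freyd.Q Aᵒᵖ).map m' := by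
        rw [← Functor.map_comp, ← Functor.map_comp, Quotient.functor_map_eq_iff]
        refine ⟨e₂.op, ?_⟩
        show e₂.op ≫ Z₂.as.ρ = (α ≫ m').1 - (β ≫ m').1
        simp only [FreydObj.comp_val]
        rw [Limits.zero_comp, sub_zero]
        apply Quiver.Hom.unop_inj
        simpa only [unop_comp, Quiver.Hom.unop_op, α] using he₂
      have hαβ := (cancel_mono ((Freyd.Q Aᵒᵖ).map m')).mp hQeq
      rw [Quotient.functor_map_eq_iff] at hαβ
      obtain ⟨l, hl⟩ := hαβ
      refine ⟨l.unop, ?_⟩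
      have h2 := congrArg Quiver.Hom.unop hl
      simp only [unop_comp, sub_eq_add_neg, unop_add, unop_neg] at h2
      simpa [α, β] using h2
    -- pushout of μ and σ₂
    obtain ⟨e₁, he₁⟩ := key (pushout m'.1.unop Z₂.as.ρ.unop)
      (pushout.inl m'.1.unop Z₂.as.ρ.unop)
      ⟨pushout.inr m'.1.unop Z₂.as.ρ.unop, pushout.condition.symm⟩
    obtain ⟨w₁', hw₁'⟩ := u'.2
    have hx0 : u'.1.unop ≫ Z₁.as.ρ.unop = ρA ≫ w₁'.unop := by
      have h2 := congrArg Quiver.Hom.unop hw₁'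
      simpa only [unop_comp, Quiver.Hom.unop_op] using h2
    have hx : ((FFπ ρA).app (pushout m'.1.unop Z₂.as.ρ.unop))
        ((u'.1.unop ≫ biprod.inl) ≫ biprod.desc (pushout.inl m'.1.unop Z₂.as.ρ.unop)
          (pushout.inr m'.1.unop Z₂.as.ρ.unop)) = 0 := by
      have hcomp : (u'.1.unop ≫ biprod.inl) ≫ biprod.desc
            (pushout.inl m'.1.unop Z₂.as.ρ.unop) (pushout.inr m'.1.unop Z₂.as.ρ.unop)
          = ρA ≫ (w₁'.unop ≫ e₁) := by
        rw [Category.assoc, biprod.inl_desc, ← he₁, ← Category.assoc, hx0, Category.assoc]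
      rw [hcomp, FFπ_rel_zero]
    obtain ⟨t, lam, hlam⟩ := FF_coker_exact ρA hPres _ _ _
      (pushout_cofork_isColimit m'.1.unop Z₂.as.ρ.unop) _ hx
    have hfst : ρA ≫ (lam ≫ biprod.fst) = t ≫ m'.1.unop - u'.1.unop := by
      have h2 := congrArg (fun q => q ≫ (biprod.fst : _ ⊞ _ ⟶ Z₁.as.A.unop)) hlam
      simpa using h2
    have hsnd : t ≫ Z₂.as.ρ.unop = ρA ≫ (-(lam ≫ biprod.snd)) := by
      have h2 := congrArg (fun q => q ≫ (biprod.snd : _ ⊞ _ ⟶ Z₂.as.R.unop)) hlam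
      simp only [Category.assoc, Preadditive.sub_comp, biprod.lift_snd,
        Preadditive.comp_neg, biprod.inl_snd, Limits.comp_zero, sub_zero] at h2
      rw [Preadditive.comp_neg, h2, neg_neg]
    let τ : Z₂.as ⟶ (⟨Opposite.op RA, Opposite.op A₀, ρA.op⟩ : FreydObj Aᵒᵖ) :=
      ⟨t.op, ⟨(-(lam ≫ biprod.snd)).op, by
        apply Quiver.Hom.unop_inj
        simpa only [unop_comp, Quiver.Hom.unop_op] using hsnd⟩⟩
    refine ⟨(Freyd.Q Aᵒᵖ).map τ, ?_⟩
    rw [← Functor.map_comp, Quotient.functor_map_eq_iff]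
    refine ⟨(lam ≫ biprod.fst).op, ?_⟩
    show (lam ≫ biprod.fst).op ≫ ρA.op = (m' ≫ τ).1 - u'.1
    have hτ1 : (m' ≫ τ).1 = m'.1 ≫ t.op := rfl
    rw [hτ1]
    apply Quiver.Hom.unop_inj
    simp only [unop_comp, Quiver.Hom.unop_op, sub_eq_add_neg, unop_add, unop_neg]
    rw [← sub_eq_add_neg]
    exact hfst
  -- Step 4 : injectivity implies splitting
  have hIS : Injective ((Freyd.Q Aᵒᵖ).obj ⟨Opposite.op RA, Opposite.op A₀, ρA.op⟩) →
      (∃ r : (Freyd.Q Aᵒᵖ).obj ⟨Opposite.op Q, Opposite.op Pp,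
          (εP ≫ pullback.snd ρA εQ).op⟩ ⟶
        (Freyd.Q Aᵒᵖ).obj ⟨Opposite.op RA, Opposite.op A₀, ρA.op⟩,
      (Freyd.Q Aᵒᵖ).map ι' ≫ r =
        𝟙 ((Freyd.Q Aᵒᵖ).obj ⟨Opposite.op RA, Opposite.op A₀, ρA.op⟩)) := by
    intro hI
    haveI := hI
    haveI := hMono
    exact Injective.factors
      (𝟙 ((Freyd.Q Aᵒᵖ).obj ⟨Opposite.op RA, Opposite.op A₀, ρA.op⟩))
      ((Freyd.Q Aᵒᵖ).map ι')
  exact ⟨⟨hSE, fun hE => hIS (hEI hE)⟩, ⟨hEI, fun hI => hSE (hIS hI)⟩⟩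

end Main

end FreydAux

/-- let `A` be abelian with enough projectives, `ρ_A : A ⟶ R_A` a morphism
of `A` viewed as an object of `A(Aᵒᵖ)` and `F = coker(Hom(R_A,−) → Hom(A,−))` the
corresponding finitely presented covariant functor.  With `ε_Q : Q ⟶ R_A` and
`ε_P : P ⟶ A ×_{R_A} Q` epimorphisms from projectives and `ρ_P = pr_Q ∘ ε_P`, the
monomorphism `(ρ_A) ⟶ (ρ_P)` represented by `pr_A ∘ ε_P` splits if and only if `F` is
right exact; equivalently, `F` is right exact if and only if `(ρ_A)` is an injective
object of `A(Aᵒᵖ)`. -/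
theorem fp_functor_rightExact_iff (A : Type u) [Category.{v} A] [Abelian A]
    [EnoughProjectives A]
    {A₀ RA : A} (ρA : A₀ ⟶ RA)
    {Q : A} (εQ : Q ⟶ RA) [Epi εQ] (hQ : Projective Q)
    {Pp : A} (εP : Pp ⟶ pullback ρA εQ) [Epi εP] (hP : Projective Pp) :
    ((∃ r : (Freyd.Q Aᵒᵖ).obj ⟨Opposite.op Q, Opposite.op Pp,
          (εP ≫ pullback.snd ρA εQ).op⟩ ⟶
        (Freyd.Q Aᵒᵖ).obj ⟨Opposite.op RA, Opposite.op A₀, ρA.op⟩,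
      (Freyd.Q Aᵒᵖ).map
        (X := ⟨Opposite.op RA, Opposite.op A₀, ρA.op⟩)
        (Y := ⟨Opposite.op Q, Opposite.op Pp, (εP ≫ pullback.snd ρA εQ).op⟩)
        ⟨(εP ≫ pullback.fst ρA εQ).op, ⟨εQ.op, by
          rw [← op_comp, ← op_comp]
          congr 1
          simp [pullback.condition]⟩⟩ ≫ r =
        𝟙 ((Freyd.Q Aᵒᵖ).obj ⟨Opposite.op RA, Opposite.op A₀, ρA.op⟩)) ↔
      Nonempty (PreservesFiniteColimits (cokernel (preadditiveCoyoneda.map ρA.op)))) ∧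
    (Nonempty (PreservesFiniteColimits (cokernel (preadditiveCoyoneda.map ρA.op))) ↔
      Injective ((Freyd.Q Aᵒᵖ).obj ⟨Opposite.op RA, Opposite.op A₀, ρA.op⟩)) := by
  exact FreydAux.main_core ρA εQ hQ εP hP _ rfl
end Aux
end
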